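/- arXiv:math/0006020 — 2 statements merged into one kernel-verified Lean document; each statement's English description precedes it below -/
import Mathlib

section
/- Let A = M_n(k) with basis {E_{ij}}, let ρ = Σ ρ_{iℓjm} E_{ij} ⊗ E_{ℓm} ∈ A ⊗ A satisfy: ρ_{iℓjm} ≠ 0 implies {i, ℓ} = {j, m}, ρ_{iℓiℓ} ≠ 0 for all i, ℓ, and for all distinct i, ℓ at least one of ρ_{iℓℓi}, ρ_{ℓiiℓ} is zero. Then ρ is invertible in A ⊗ A, and its inverse Q = Σ Q_{iℓjm} E_{ij} ⊗ E_{ℓm} satisfies: Q_{iℓjm} ≠ 0 implies {i, ℓ} = {j, m}; Q_{iℓiℓ} = 1/ρ_{iℓiℓ} for all i, ℓ; and Q_{iℓℓi} = −ρ_{iℓℓi}/(ρ_{iℓiℓ} ρ_{ℓiℓi}) for distinct i, ℓ. -/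
open TensorProduct

noncomputable section

variable (k : Type*) [Field k] (A : Type*) [Ring A] [Algebra k A]

/-- The linear map `A ⊗ A → A ⊗ Aᵐᵒᵖ` used to interpret elements in `A ⊗ Aᵒᵖ`. -/
def toOpTensor : A ⊗[k] A →ₗ[k] A ⊗[k] Aᵐᵒᵖ :=
  TensorProduct.map LinearMap.id (MulOpposite.opLinearEquiv k).toLinearMap

/-- `ρ ↦ ρ₁₂` in `A ⊗ (A ⊗ A)`. -/
def rho12 : A ⊗[k] A →ₐ[k] A ⊗[k] (A ⊗[k] A) :=
  Algebra.TensorProduct.map (AlgHom.id k A) Algebra.TensorProduct.includeLeft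

/-- `ρ ↦ ρ₁₃`. -/
def rho13 : A ⊗[k] A →ₐ[k] A ⊗[k] (A ⊗[k] A) :=
  Algebra.TensorProduct.map (AlgHom.id k A) Algebra.TensorProduct.includeRight

/-- `ρ ↦ ρ₂₃`. -/
def rho23 : A ⊗[k] A →ₐ[k] A ⊗[k] (A ⊗[k] A) :=
  Algebra.TensorProduct.includeRight

/-- The quantum Yang–Baxter equation. -/
def YangBaxter (ρ : A ⊗[k] A) : Prop :=
  rho12 k A ρ * rho13 k A ρ * rho23 k A ρ = rho23 k A ρ * rho13 k A ρ * rho12 k A ρ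

/-- An oriented quantum algebra structure `(A, ρ, t_d, t_u)` (with `ρinv` the inverse of `ρ`). -/
structure OrientedQA (ρ ρinv : A ⊗[k] A) (td tu : A →ₗ[k] A) : Prop where
  td_bij : Function.Bijective td
  tu_bij : Function.Bijective tu
  td_one : td 1 = 1
  td_mul : ∀ a b : A, td (a * b) = td a * td b
  tu_one : tu 1 = 1
  tu_mul : ∀ a b : A, tu (a * b) = tu a * tu b
  comm : ∀ a : A, td (tu a) = tu (td a)
  mul_inv : ρ * ρinv = 1
  inv_mul : ρinv * ρ = 1
  qa1_left : toOpTensor k A (TensorProduct.map LinearMap.id tu ρ) *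
      toOpTensor k A (TensorProduct.map td LinearMap.id ρinv) = 1
  qa1_right : toOpTensor k A (TensorProduct.map td LinearMap.id ρinv) *
      toOpTensor k A (TensorProduct.map LinearMap.id tu ρ) = 1
  qa2_d : TensorProduct.map td td ρ = ρ
  qa2_u : TensorProduct.map tu tu ρ = ρ
  qa3 : YangBaxter k A ρ

/-- Left contraction `(u* ⊗ 1)(ρ)`. -/
def contractL (f : Module.Dual k A) : A ⊗[k] A →ₗ[k] A :=
  (TensorProduct.lid k A).toLinearMap ∘ₗ TensorProduct.map f LinearMap.id

/-- Right contraction `(1 ⊗ v*)(ρ)`. -/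
def contractR (g : Module.Dual k A) : A ⊗[k] A →ₗ[k] A :=
  (TensorProduct.rid k A).toLinearMap ∘ₗ TensorProduct.map LinearMap.id g

/-- The set `A_(ρ)` of all `(u* ⊗ 1)(ρ) + (1 ⊗ v*)(ρ)`. -/
def contractSet (ρ : A ⊗[k] A) : Set A :=
  {x | ∃ f g : Module.Dual k A, x = contractL k A f ρ + contractR k A g ρ}

/-- A quantum algebra `(A, ρ, s)`, with `s` an algebra anti-automorphism. -/
structure QuantumAlgebra (ρ ρinv : A ⊗[k] A) (s : A ≃ₗ[k] A) : Prop where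
  s_one : s 1 = 1
  s_anti : ∀ a b : A, s (a * b) = s b * s a
  mul_inv : ρ * ρinv = 1
  inv_mul : ρinv * ρ = 1
  QA1 : ρinv = TensorProduct.map s.toLinearMap LinearMap.id ρ
  QA2 : TensorProduct.map s.toLinearMap s.toLinearMap ρ = ρ
  QA3 : YangBaxter k A ρ

end

open TensorProduct

/-- `Σ_{i,ℓ,j,m} r_{iℓjm} E_{ij} ⊗ E_{ℓm} ∈ M_n(k) ⊗ M_n(k)`. -/
noncomputable def coeffTensor {k : Type*} [Field k] (n : ℕ)
    (r : Fin n → Fin n → Fin n → Fin n → k) :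
    Matrix (Fin n) (Fin n) k ⊗[k] Matrix (Fin n) (Fin n) k :=
  ∑ q : Fin n × Fin n × Fin n × Fin n,
    r q.1 q.2.1 q.2.2.1 q.2.2.2 •
      (Matrix.single q.1 q.2.2.1 (1 : k) ⊗ₜ[k]
        Matrix.single q.2.1 q.2.2.2 (1 : k))

section Aux

variable {k : Type*} [Field k] {n : ℕ}

/-- helper: sum over a type where `f` vanishes off two points -/
lemma sum_eq_pair {ι M : Type*} [Fintype ι] [DecidableEq ι] [AddCommMonoid M]
    (a b : ι) (hab : a ≠ b) (f : ι → M)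
    (h : ∀ c, c ≠ a → c ≠ b → f c = 0) : ∑ c, f c = f a + f b := by
  rw [← Finset.sum_subset (Finset.subset_univ ({a, b} : Finset ι))
    (fun x _ hx => by
      simp only [Finset.mem_insert, Finset.mem_singleton, not_or] at hx
      exact h x hx.1 hx.2)]
  exact Finset.sum_pair hab

/-- The algebra equivalence `Mₙ(k) ⊗ Mₙ(k) ≃ M_{n²}(k)`. -/
noncomputable def tensorToBig (n : ℕ) :
    (Matrix (Fin n) (Fin n) k ⊗[k] Matrix (Fin n) (Fin n) k) ≃ₐ[k]
      Matrix (Fin n × Fin n) (Fin n × Fin n) k :=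
  (matrixEquivTensor (Fin n) k (Matrix (Fin n) (Fin n) k)).symm.trans
    (Matrix.compAlgEquiv (Fin n) (Fin n) k k)

lemma tensorToBig_stdBasis (i j l m : Fin n) :
    tensorToBig (k := k) n (Matrix.single i j (1 : k) ⊗ₜ[k] Matrix.single l m (1 : k)) =
      Matrix.single (l, i) (m, j) 1 := by
  have h1 : (matrixEquivTensor (Fin n) k (Matrix (Fin n) (Fin n) k)).symm
      (Matrix.single i j (1 : k) ⊗ₜ[k] Matrix.single l m (1 : k)) =
      Matrix.single l m (Matrix.single i j (1 : k)) := by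
    rw [(matrixEquivTensor (Fin n) k (Matrix (Fin n) (Fin n) k)).symm_apply_eq]
    simp
  rw [tensorToBig, AlgEquiv.trans_apply, h1]
  ext ⟨a, b⟩ ⟨c, d⟩
  simp only [Matrix.compAlgEquiv_apply, Matrix.single, Matrix.of_apply]
  by_cases hl : l = a <;> by_cases hm : m = c <;> by_cases hi : i = b <;> by_cases hj : j = d <;>
    simp [Matrix.comp_apply, hl, hm, hi, hj, Prod.ext_iff]

lemma tensorToBig_coeffTensor (r : Fin n → Fin n → Fin n → Fin n → k) :
    tensorToBig (k := k) n (coeffTensor n r) =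
      Matrix.of (fun p q : Fin n × Fin n => r p.2 p.1 q.2 q.1) := by
  rw [coeffTensor, map_sum]
  ext ⟨a, b⟩ ⟨c, d⟩
  rw [Matrix.sum_apply]
  simp only [map_smul, tensorToBig_stdBasis, Matrix.smul_apply, smul_eq_mul]
  rw [Finset.sum_eq_single (b, a, d, c)]
  · simp [Matrix.single]
  · rintro ⟨x1, x2, x3, x4⟩ _ hne
    simp only [Matrix.single, Matrix.of_apply, Prod.mk.injEq]
    rw [if_neg, mul_zero]
    rintro ⟨⟨rfl, rfl⟩, rfl, rfl⟩
    exact hne rfl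
  · intro h; exact absurd (Finset.mem_univ _) h

end Aux

/-- under the stated support conditions, `ρ = Σ r_{iℓjm} E_{ij} ⊗ E_{ℓm}`
is invertible, and its inverse `Q = Σ Q_{iℓjm} E_{ij} ⊗ E_{ℓm}` satisfies
`Q_{iℓjm} ≠ 0 → {i,ℓ} = {j,m}`, `Q_{iℓiℓ} = 1/ρ_{iℓiℓ}`, and
`Q_{iℓℓi} = -ρ_{iℓℓi}/(ρ_{iℓiℓ}ρ_{ℓiℓi})` for `i ≠ ℓ`. -/
theorem coeffTensor_inverse {k : Type*} [Field k] (n : ℕ)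
    (r : Fin n → Fin n → Fin n → Fin n → k)
    (hsupp : ∀ i l j m : Fin n, r i l j m ≠ 0 → ({i, l} : Set (Fin n)) = {j, m})
    (hdiag : ∀ i l : Fin n, r i l i l ≠ 0)
    (hoff : ∀ i l : Fin n, i ≠ l → r i l l i = 0 ∨ r l i i l = 0) :
    ∃ Q : Fin n → Fin n → Fin n → Fin n → k,
      coeffTensor n Q * coeffTensor n r = 1 ∧
      coeffTensor n r * coeffTensor n Q = 1 ∧
      (∀ i l j m : Fin n, Q i l j m ≠ 0 → ({i, l} : Set (Fin n)) = {j, m}) ∧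
      (∀ i l : Fin n, Q i l i l = 1 / r i l i l) ∧
      (∀ i l : Fin n, i ≠ l → Q i l l i = -(r i l l i) / (r i l i l * r l i l i)) := by
  classical
  have aux1 : ∀ a b c : k, a ≠ 0 → c ≠ 0 → a⁻¹ * b + -b / (a * c) * c = 0 := by
    intro a b c ha hc; field_simp; ring
  have aux2 : ∀ a b c : k, a ≠ 0 → c ≠ 0 → a * (-b / (a * c)) + b * c⁻¹ = 0 := by
    intro a b c ha hc; field_simp; ring
  have hz : ∀ i l j m : Fin n, ¬((j = i ∧ m = l) ∨ (j = l ∧ m = i)) → r i l j m = 0 := by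
    intro i l j m h
    by_contra hr
    have := hsupp i l j m hr
    rw [Set.pair_eq_pair_iff] at this
    tauto
  set Q : Fin n → Fin n → Fin n → Fin n → k := fun i l j m =>
    if j = i ∧ m = l then (r i l i l)⁻¹
    else if j = l ∧ m = i ∧ i ≠ l then -(r i l l i) / (r i l i l * r l i l i) else 0 with hQdef
  have hQ1 : ∀ i l : Fin n, Q i l i l = (r i l i l)⁻¹ := by
    intro i l; rw [hQdef]; simp
  have hQ2 : ∀ i l : Fin n, i ≠ l → Q i l l i = -(r i l l i) / (r i l i l * r l i l i) := by
    intro i l h; rw [hQdef]; simp [h, Ne.symm h]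
  have hQ0 : ∀ i l a b : Fin n, ¬(a = i ∧ b = l) → ¬(a = l ∧ b = i) → Q i l a b = 0 := by
    intro i l a b h1 h2; rw [hQdef]; simp only
    rw [if_neg h1, if_neg (by tauto)]
  refine ⟨Q, ?_, ?_, ?_, ?_, ?_⟩
  · -- Q * r = 1
    apply (tensorToBig (k := k) n).injective
    rw [map_mul, map_one, tensorToBig_coeffTensor, tensorToBig_coeffTensor]
    ext p q
    obtain ⟨l, i⟩ := p
    obtain ⟨m, j⟩ := q
    rw [Matrix.mul_apply, Matrix.one_apply]
    simp only [Matrix.of_apply]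
    by_cases hil : i = l
    · subst hil
      rw [Finset.sum_eq_single (i, i)]
      · by_cases hjm : j = i ∧ m = i
        · obtain ⟨e1, e2⟩ := hjm
          rw [e1, e2, hQ1, inv_mul_cancel₀ (hdiag i i), if_pos rfl]
        · rw [hz i i j m (by tauto), mul_zero,
            if_neg (fun h => hjm ⟨(congrArg Prod.snd h).symm, (congrArg Prod.fst h).symm⟩)]
      · rintro ⟨b, a⟩ _ hne
        rw [hQ0 i i a b (by rintro ⟨rfl, rfl⟩; exact hne rfl)
          (by rintro ⟨rfl, rfl⟩; exact hne rfl), zero_mul]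
      · intro h; exact absurd (Finset.mem_univ _) h
    · rw [sum_eq_pair (l, i) (i, l) (fun h => hil (congrArg Prod.fst h).symm)]
      · simp only
        by_cases h1 : m = l ∧ j = i
        · obtain ⟨e1, e2⟩ := h1
          rw [e1, e2, if_pos rfl, hQ1]
          rcases hoff i l hil with h | h
          · rw [hQ2 i l hil, h, inv_mul_cancel₀ (hdiag i l)]; simp
          · rw [h, mul_zero, add_zero, inv_mul_cancel₀ (hdiag i l)]
        · rw [if_neg (fun h => h1 ⟨(congrArg Prod.fst h).symm, (congrArg Prod.snd h).symm⟩)]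
          by_cases h2 : m = i ∧ j = l
          · obtain ⟨e1, e2⟩ := h2
            rw [e1, e2, hQ1, hQ2 i l hil]
            exact aux1 _ _ _ (hdiag i l) (hdiag l i)
          · rw [hz i l j m (by tauto), hz l i j m (by tauto), mul_zero, mul_zero, add_zero]
      · rintro ⟨b, a⟩ hne1 hne2
        rw [hQ0 i l a b (by rintro ⟨rfl, rfl⟩; exact hne1 rfl)
          (by rintro ⟨rfl, rfl⟩; exact hne2 rfl), zero_mul]
  · -- r * Q = 1
    apply (tensorToBig (k := k) n).injective
    rw [map_mul, map_one, tensorToBig_coeffTensor, tensorToBig_coeffTensor]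
    ext p q
    obtain ⟨l, i⟩ := p
    obtain ⟨m, j⟩ := q
    rw [Matrix.mul_apply, Matrix.one_apply]
    simp only [Matrix.of_apply]
    by_cases hil : i = l
    · subst hil
      rw [Finset.sum_eq_single (i, i)]
      · by_cases hjm : j = i ∧ m = i
        · obtain ⟨e1, e2⟩ := hjm
          rw [e1, e2, hQ1, mul_inv_cancel₀ (hdiag i i), if_pos rfl]
        · rw [hQ0 i i j m hjm hjm, mul_zero,
            if_neg (fun h => hjm ⟨(congrArg Prod.snd h).symm, (congrArg Prod.fst h).symm⟩)]
      · rintro ⟨b, a⟩ _ hne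
        rw [hz i i a b (by rintro (⟨rfl, rfl⟩ | ⟨rfl, rfl⟩) <;> exact hne rfl), zero_mul]
      · intro h; exact absurd (Finset.mem_univ _) h
    · rw [sum_eq_pair (l, i) (i, l) (fun h => hil (congrArg Prod.fst h).symm)]
      · simp only
        by_cases h1 : m = l ∧ j = i
        · obtain ⟨e1, e2⟩ := h1
          rw [e1, e2, if_pos rfl, hQ1, mul_inv_cancel₀ (hdiag i l)]
          rcases hoff i l hil with h | h
          · rw [h, zero_mul, add_zero]
          · rw [hQ2 l i (Ne.symm hil), h]; simp
        · rw [if_neg (fun h => h1 ⟨(congrArg Prod.fst h).symm, (congrArg Prod.snd h).symm⟩)]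
          by_cases h2 : m = i ∧ j = l
          · obtain ⟨e1, e2⟩ := h2
            rw [e1, e2, hQ2 i l hil, hQ1]
            exact aux2 _ _ _ (hdiag i l) (hdiag l i)
          · rw [hQ0 i l j m (by tauto) (by tauto), hQ0 l i j m (by tauto) (by tauto),
              mul_zero, mul_zero, add_zero]
      · rintro ⟨b, a⟩ hne1 hne2
        rw [hz i l a b (by
          rintro (⟨rfl, rfl⟩ | ⟨rfl, rfl⟩)
          · exact hne1 rfl
          · exact hne2 rfl), zero_mul]
  · -- support of Q
    intro i l j m hQ
    rw [Set.pair_eq_pair_iff]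
    rw [hQdef] at hQ
    simp only at hQ
    by_cases c1 : j = i ∧ m = l
    · exact Or.inl ⟨c1.1.symm, c1.2.symm⟩
    · rw [if_neg c1] at hQ
      by_cases c2 : j = l ∧ m = i ∧ i ≠ l
      · exact Or.inr ⟨c2.2.1.symm, c2.1.symm⟩
      · rw [if_neg c2] at hQ; exact absurd rfl hQ
  · intro i l; rw [hQ1, one_div]
  · intro i l h; exact hQ2 i l h
end

section
/- Let r ∈ k*, r ≠ 1, and fix a function ε: {1, …, n} → {0, 1} (ε(i) = 1 meaning 'aᵢ = a'). For x ∈ k* with x ≠ 1 define ωᵢ(x)² = −(−x)^{−ε(i)} x^{η₊(0:i) − η₋(0:i)}, where η₊(ℓ:m) = |{i : ℓ < i ≤ m, ε(i) = 1}| and η₋(ℓ:m) = |{i : ℓ < i ≤ m, ε(i) = 0}|. Then for all 0 ≤ ℓ ≤ n: Σ_{j=1}^{ℓ} ωⱼ(x)² = (1 − x^{η₊(0:ℓ) − η₋(0:ℓ)})/(1 − x). -/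
lemma Ioc_zero_succ (l : ℕ) : Finset.Ioc 0 (l+1) = insert (l+1) (Finset.Ioc 0 l) := by
  ext i
  simp [Nat.lt_succ_iff_lt_or_eq, Nat.le_succ_iff]
  omega

/-- with `ωⱼ(x)² = -(-x)^{-ε(j)} x^{η₊(0:j) - η₋(0:j)}`, where
`η₊(ℓ:m)` (resp. `η₋(ℓ:m)`) counts the `i` with `ℓ < i ≤ m` and `ε(i) = 1`
(resp. `ε(i) = 0`), one has
`Σ_{j=1}^{ℓ} ωⱼ(x)² = (1 - x^{η₊(0:ℓ) - η₋(0:ℓ)})/(1 - x)` for all `0 ≤ ℓ ≤ n`. -/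
theorem sum_omega_sq {k : Type*} [Field k] (n : ℕ) (ε : ℕ → Bool)
    (x : k) (hx0 : x ≠ 0) (hx1 : x ≠ 1) :
    ∀ l : ℕ, l ≤ n →
      (∑ j ∈ Finset.Icc 1 l,
          -((-x) ^ (-(if ε j then (1 : ℤ) else 0)) *
            x ^ (((((Finset.Ioc 0 j).filter fun i => ε i = true).card : ℤ)) -
                 ((((Finset.Ioc 0 j).filter fun i => ε i = false).card : ℤ))))) =
        (1 - x ^ (((((Finset.Ioc 0 l).filter fun i => ε i = true).card : ℤ)) -
                  ((((Finset.Ioc 0 l).filter fun i => ε i = false).card : ℤ)))) /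
          (1 - x) := by
  have h1 : (1 : k) - x ≠ 0 := sub_ne_zero.mpr (Ne.symm hx1)
  intro l _
  induction l with
  | zero => simp
  | succ l ih =>
    rw [show Finset.Icc 1 (l+1) = insert (l+1) (Finset.Icc 1 l) by
        ext i; simp; omega,
      Finset.sum_insert (by simp)]
    rw [ih (by omega)]
    have hnot : (l+1) ∉ Finset.Ioc 0 l := by simp
    rw [Ioc_zero_succ, Finset.filter_insert, Finset.filter_insert]
    set a := ((Finset.filter (fun i => ε i = true) (Finset.Ioc 0 l)).card : ℤ)
    set b := ((Finset.filter (fun i => ε i = false) (Finset.Ioc 0 l)).card : ℤ)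
    by_cases h : ε (l+1)
    · simp only [h, if_pos, if_true]
      rw [Finset.card_insert_of_notMem (fun hm => hnot (Finset.mem_of_mem_filter _ hm))]
      push_cast
      rw [show a + 1 - b = (a - b) + 1 by ring, zpow_add₀ hx0, zpow_neg_one, zpow_one]
      field_simp
      ring
    · simp only [h, if_neg, if_false, Bool.false_eq_true, if_true]
      rw [Finset.card_insert_of_notMem (fun hm => hnot (Finset.mem_of_mem_filter _ hm))]
      push_cast
      rw [show a - (b + 1) = (a - b) + (-1) by ring, zpow_add₀ hx0, zpow_neg_one, neg_zero, zpow_zero]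
      field_simp
      ring
end
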